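/- Let s, t ≥ 2 and z > t·s be natural numbers, set θ' = t·(2s−1) and p = min(⌊(z−1)/(t·(s−1))⌋, t−1). Define P_CA = {i + t·j : 0 ≤ i ≤ t−1, 0 ≤ j ≤ s−1}, P_CB = {t·q + θ'·l : 0 ≤ q ≤ s−1, 0 ≤ l ≤ t−1}, P_SA = (⋃_{l=0}^{p−1} {t·s + θ'·l + w : 0 ≤ w ≤ t·(s−1)−1}) ∪ {t·s + θ'·p + u : 0 ≤ u ≤ z−1−p·t·(s−1)}, and P_SB = {t·s + θ'·(t−1) + r : 0 ≤ r ≤ z−1}. Then the sumset (P_CA ∪ P_SA) + (P_CB ∪ P_SB) has cardinality (p+2)·t·s + θ'·(t−1) + 2z − 1. -/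
import Mathlib


open Pointwise

/-- PolyDot-CMPC worker count in the region z > ts:
|(P_CA ∪ P_SA) + (P_CB ∪ P_SB)| = (p+2)·ts + θ'·(t−1) + 2z − 1 = ψ₁,
with θ' = t·(2s−1) and p = min(⌊(z−1)/(t·(s−1))⌋, t−1). -/
theorem polydot_workers_psi1 (s t z : ℕ) (hs : 2 ≤ s) (ht : 2 ≤ t)
    (hz : t * s < z) :
    (({n : ℕ | ∃ i j, i < t ∧ j < s ∧ n = i + t * j} ∪
      ({n : ℕ | ∃ l w, l < min ((z - 1) / (t * (s - 1))) (t - 1) ∧ w < t * (s - 1) ∧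
          n = t * s + (t * (2 * s - 1)) * l + w} ∪
       {n : ℕ | ∃ u, u ≤ z - 1 - (min ((z - 1) / (t * (s - 1))) (t - 1)) * (t * (s - 1)) ∧
          n = t * s + (t * (2 * s - 1)) * (min ((z - 1) / (t * (s - 1))) (t - 1)) + u})) +
     ({n : ℕ | ∃ q l, q < s ∧ l < t ∧ n = t * q + (t * (2 * s - 1)) * l} ∪
      {n : ℕ | ∃ r, r < z ∧ n = t * s + (t * (2 * s - 1)) * (t - 1) + r})).ncard
      = (min ((z - 1) / (t * (s - 1))) (t - 1) + 2) * (t * s) +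
        (t * (2 * s - 1)) * (t - 1) + 2 * z - 1 := by
  set d := t * (s - 1) with hd_def
  set θ := t * (2 * s - 1) with hθ_def
  set p := min ((z - 1) / d) (t - 1) with hp_def
  have ht0 : 0 < t := by omega
  have hd0 : 0 < d := Nat.mul_pos ht0 (by omega)
  have hθ0 : 0 < θ := Nat.mul_pos ht0 (by omega)
  have htsd : t * s = d + t := by
    rw [hd_def]
    have h1 : s = (s - 1) + 1 := by omega
    calc t * s = t * ((s - 1) + 1) := by rw [← h1]
      _ = t * (s - 1) + t := by ring
  have hθ2 : θ = t * s + d := by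
    rw [hθ_def, hd_def]
    have h1 : 2 * s - 1 = s + (s - 1) := by omega
    rw [h1, Nat.mul_add]
  have hp1 : 1 ≤ p := by
    refine le_min ?_ (by omega)
    rw [Nat.one_le_div_iff hd0]
    omega
  have hpt : p ≤ t - 1 := min_le_right _ _
  have hpd : p * d ≤ z - 1 := (Nat.le_div_iff_mul_le hd0).mp (min_le_left _ _)
  have hθp : θ * p = t * s * p + p * d := by rw [hθ2]; ring
  have hθt : θ * (t - 1) + θ = θ * t := by
    have h1 : t - 1 + 1 = t := by omega
    calc θ * (t - 1) + θ = θ * ((t - 1) + 1) := by ring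
      _ = θ * t := by rw [h1]
  -- the sumset is the interval [0, M]
  have hset : ({n : ℕ | ∃ i j, i < t ∧ j < s ∧ n = i + t * j} ∪
      ({n : ℕ | ∃ l w, l < p ∧ w < d ∧ n = t * s + θ * l + w} ∪
       {n : ℕ | ∃ u, u ≤ z - 1 - p * d ∧ n = t * s + θ * p + u})) +
     ({n : ℕ | ∃ q l, q < s ∧ l < t ∧ n = t * q + θ * l} ∪
      {n : ℕ | ∃ r, r < z ∧ n = t * s + θ * (t - 1) + r})
      = Set.Iic ((t * s + θ * p + (z - 1 - p * d)) + (t * s + θ * (t - 1) + (z - 1))) := by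
    have hmemA1 : ∀ a, a < θ →
        a ∈ ({n : ℕ | ∃ i j, i < t ∧ j < s ∧ n = i + t * j} ∪
        ({n : ℕ | ∃ l w, l < p ∧ w < d ∧ n = t * s + θ * l + w} ∪
         {n : ℕ | ∃ u, u ≤ z - 1 - p * d ∧ n = t * s + θ * p + u})) := by
      intro a ha
      by_cases h : a < t * s
      · left
        refine ⟨a % t, a / t, Nat.mod_lt _ ht0, ?_, (Nat.mod_add_div a t).symm⟩
        rw [Nat.div_lt_iff_lt_mul ht0]
        rw [mul_comm t s] at h; exact h
      · right; left
        exact ⟨0, a - t * s, by omega, by omega, by omega⟩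
    have hmemA2 : ∀ l w, l < p → w < d →
        t * s + θ * l + w ∈ ({n : ℕ | ∃ i j, i < t ∧ j < s ∧ n = i + t * j} ∪
        ({n : ℕ | ∃ l w, l < p ∧ w < d ∧ n = t * s + θ * l + w} ∪
         {n : ℕ | ∃ u, u ≤ z - 1 - p * d ∧ n = t * s + θ * p + u})) := by
      intro l w hl hw; right; left; exact ⟨l, w, hl, hw, rfl⟩
    have hmemA3 : ∀ u, u ≤ z - 1 - p * d →
        t * s + θ * p + u ∈ ({n : ℕ | ∃ i j, i < t ∧ j < s ∧ n = i + t * j} ∪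
        ({n : ℕ | ∃ l w, l < p ∧ w < d ∧ n = t * s + θ * l + w} ∪
         {n : ℕ | ∃ u, u ≤ z - 1 - p * d ∧ n = t * s + θ * p + u})) := by
      intro u hu; right; right; exact ⟨u, hu, rfl⟩
    have hmemB1 : ∀ l, l < t →
        θ * l ∈ ({n : ℕ | ∃ q l, q < s ∧ l < t ∧ n = t * q + θ * l} ∪
        {n : ℕ | ∃ r, r < z ∧ n = t * s + θ * (t - 1) + r}) := by
      intro l hl; left; exact ⟨0, l, by omega, hl, by omega⟩
    have hmemB2 : ∀ r, r < z →
        t * s + θ * (t - 1) + r ∈ ({n : ℕ | ∃ q l, q < s ∧ l < t ∧ n = t * q + θ * l} ∪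
        {n : ℕ | ∃ r, r < z ∧ n = t * s + θ * (t - 1) + r}) := by
      intro r hr; right; exact ⟨r, hr, rfl⟩
    apply Set.Subset.antisymm
    · rintro n hn
      rw [Set.mem_add] at hn
      obtain ⟨a, ha, b, hb, rfl⟩ := hn
      rw [Set.mem_Iic]
      have hA : a ≤ t * s + θ * p + (z - 1 - p * d) := by
        rcases ha with ⟨i, j, hi, hj, rfl⟩ | ⟨l, w, hl, hw, rfl⟩ | ⟨u, hu, rfl⟩
        · have h1 : t * (j + 1) ≤ t * s := Nat.mul_le_mul_left t hj
          have h2 : t * (j + 1) = t * j + t := by ring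
          omega
        · have h1 : θ * (l + 1) ≤ θ * p := Nat.mul_le_mul_left θ hl
          have h2 : θ * (l + 1) = θ * l + θ := by ring
          omega
        · omega
      have hB : b ≤ t * s + θ * (t - 1) + (z - 1) := by
        rcases hb with ⟨q, l, hq, hl, rfl⟩ | ⟨r, hr, rfl⟩
        · have h1 : t * (q + 1) ≤ t * s := Nat.mul_le_mul_left t hq
          have h2 : t * (q + 1) = t * q + t := by ring
          have h3 : θ * l ≤ θ * (t - 1) := Nat.mul_le_mul_left θ (by omega)
          omega
        · omega
      omega
    · intro n hn
      rw [Set.mem_Iic] at hn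
      rw [Set.mem_add]
      rcases lt_or_ge n (θ * t) with h1 | h1
      · refine ⟨n % θ, hmemA1 _ (Nat.mod_lt _ hθ0), θ * (n / θ), hmemB1 _ ?_, Nat.mod_add_div n θ⟩
        rw [Nat.div_lt_iff_lt_mul hθ0]
        rw [mul_comm θ t] at h1; exact h1
      rcases lt_or_ge n (t * s + θ * (t - 1) + z) with h2 | h2
      · exact ⟨0, hmemA1 0 hθ0, t * s + θ * (t - 1) + (n - (t * s + θ * (t - 1))),
          hmemB2 _ (by omega), by omega⟩
      rcases lt_or_ge n (t * s + θ * (t - 1) + z + d) with h3 | h3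
      · exact ⟨n - (t * s + θ * (t - 1) + (z - 1)), hmemA1 _ (by omega),
          t * s + θ * (t - 1) + (z - 1), hmemB2 _ (by omega), by omega⟩
      · -- n ≥ β + z + d; set m = n - β
        obtain ⟨m, hm⟩ : ∃ m, n = t * s + θ * (t - 1) + m := ⟨n - (t * s + θ * (t - 1)), by omega⟩
        have hmub : m ≤ t * s + θ * p + (z - 1 - p * d) + (z - 1) := by omega
        have hmlb : t * s + 1 ≤ m := by omega
        rcases lt_or_ge ((m - t * s) / θ) p with hl | hl
        · have hq := Nat.mod_add_div (m - t * s) θ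
          have hmodθ : (m - t * s) % θ < θ := Nat.mod_lt _ hθ0
          rcases lt_or_ge ((m - t * s) % θ) d with hwd | hwd
          · exact ⟨t * s + θ * ((m - t * s) / θ) + (m - t * s) % θ,
              hmemA2 _ _ hl hwd, t * s + θ * (t - 1) + 0, hmemB2 0 (by omega), by omega⟩
          · exact ⟨t * s + θ * ((m - t * s) / θ) + (d - 1),
              hmemA2 _ _ hl (by omega), t * s + θ * (t - 1) + ((m - t * s) % θ - d + 1),
              hmemB2 _ (by omega), by omega⟩
        · have hθpm : θ * p ≤ m - t * s := by
            calc θ * p ≤ θ * ((m - t * s) / θ) := Nat.mul_le_mul_left θ hl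
              _ ≤ m - t * s := Nat.mul_div_le _ θ
          rcases le_or_gt (m - t * s - θ * p) (z - 1 - p * d) with hwc | hwc
          · exact ⟨t * s + θ * p + (m - t * s - θ * p), hmemA3 _ hwc,
              t * s + θ * (t - 1) + 0, hmemB2 0 (by omega), by omega⟩
          · exact ⟨t * s + θ * p + (z - 1 - p * d), hmemA3 _ le_rfl,
              t * s + θ * (t - 1) + ((m - t * s - θ * p) - (z - 1 - p * d)),
              hmemB2 _ (by omega), by omega⟩
  rw [hset, ← Finset.coe_Iic, Set.ncard_coe_finset, Nat.card_Iic]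
  have hexp : (p + 2) * (t * s) = t * s * p + 2 * (t * s) := by ring
  omega
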